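/- (Denominator clearing over a number field.) Let k be a number field with ring of integers 𝓞_k, let S be a finite set of finite places of k, and let A ∈ k[x] be nonconstant. Then there exists δ ∈ k with δ ≠ 0 such that for every t ∈ k with A.eval t ∈ 𝓞_{k,S}, one has δ*t ∈ 𝓞_{k,S}. -/

import Mathlib

open Polynomial NumberField IsDedekindDomain

lemma key_val {K Γ₀ : Type*} [Field K] [LinearOrderedCommGroupWithZero Γ₀]
    (v : Valuation K Γ₀) (p : K[X]) (hp : p ≠ 0)
    (hc : ∀ i, v (p.coeff i) ≤ 1) (t : K) (ht : p.eval t = 0) :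
    v (p.leadingCoeff * t) ≤ 1 := by
  set m := p.integralNormalization with hm
  have hlead : v p.leadingCoeff ≤ 1 := hc _
  have hmc : ∀ i, v (m.coeff i) ≤ 1 := by
    intro i
    rw [hm, integralNormalization_coeff]
    split_ifs with h
    · simp
    · rw [map_mul, map_pow]
      exact mul_le_one' (hc i) (pow_le_one' hlead _)
  have hsub : ↑m.coeffs ⊆ (v.integer : Set K) := by
    intro x hx
    obtain ⟨n, -, rfl⟩ := Polynomial.mem_coeffs_iff.mp hx
    exact hmc n
  set q : (v.integer : Subring K)[X] := m.toSubring v.integer hsub with hq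
  have hmap : q.map (Subring.subtype v.integer) = m := Polynomial.map_toSubring _ _ _
  have hint : IsIntegral v.integer (p.leadingCoeff * t) := by
    refine ⟨q, (Polynomial.monic_toSubring _ _ _).mpr (monic_integralNormalization hp), ?_⟩
    have halg : (algebraMap (v.integer : Subring K) K) = v.integer.subtype := rfl
    show Polynomial.eval₂ (algebraMap (v.integer : Subring K) K) (p.leadingCoeff * t) q = 0
    rw [Polynomial.eval₂_eq_eval_map, halg, hmap]
    have h0 : Polynomial.eval₂ (RingHom.id K) t p = 0 := ht
    have h1 := integralNormalization_eval₂_eq_zero (p := p) (RingHom.id K) h0 (fun x hx => hx)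
    exact h1
  exact (Valuation.integer.integers (v := v)).mem_of_integral hint

theorem stmt_14 (k : Type*) [Field k] [NumberField k]
    (S : Set (HeightOneSpectrum (𝓞 k))) (hS : S.Finite)
    (A : k[X]) (hA : 0 < A.natDegree) :
    ∃ δ : k, δ ≠ 0 ∧ ∀ t : k, A.eval t ∈ S.integer k → δ * t ∈ S.integer k := by
  have hA0 : A ≠ 0 := fun h => by simp [h] at hA
  -- common denominator
  obtain ⟨b, hb⟩ := IsLocalization.exist_integer_multiples
    (nonZeroDivisors (𝓞 k)) (Finset.range (A.natDegree + 1)) A.coeff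
  set c : k := algebraMap (𝓞 k) k (b : 𝓞 k) with hc
  have hc0 : c ≠ 0 :=
    (map_ne_zero_iff _ (IsFractionRing.injective (𝓞 k) k)).mpr (nonZeroDivisors.coe_ne_zero b)
  have hcS : c ∈ S.integer k := (S.integer k).algebraMap_mem (b : 𝓞 k)
  have hcoeff : ∀ i, c * A.coeff i ∈ S.integer k := by
    intro i
    by_cases hi : i ≤ A.natDegree
    · have := hb i (Finset.mem_range.mpr (Nat.lt_succ_of_le hi))
      obtain ⟨r, hr⟩ := this
      rw [Algebra.smul_def] at hr
      rw [← hr]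
      exact (S.integer k).algebraMap_mem r
    · rw [A.coeff_eq_zero_of_natDegree_lt (not_le.mp hi), mul_zero]
      exact zero_mem _
  refine ⟨c * A.leadingCoeff, mul_ne_zero hc0 (leadingCoeff_ne_zero.mpr hA0), ?_⟩
  intro t ht
  set p : k[X] := C c * A - C (c * A.eval t) with hpdef
  have hdegCA : (C c * A).natDegree = A.natDegree := by
    rw [natDegree_C_mul hc0]
  have hdegp : p.natDegree = A.natDegree := by
    rw [hpdef]
    rw [natDegree_sub_C, hdegCA]
  have hp0 : p ≠ 0 := fun h => by
    rw [h] at hdegp; simp at hdegp; omega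
  have hplead : p.leadingCoeff = c * A.leadingCoeff := by
    rw [leadingCoeff, hdegp, hpdef]
    rw [coeff_sub, coeff_C_mul, coeff_C, if_neg (by omega), sub_zero, leadingCoeff]
  have hpc : ∀ i, p.coeff i ∈ S.integer k := by
    intro i
    rw [hpdef, coeff_sub, coeff_C_mul, coeff_C]
    refine sub_mem (hcoeff i) ?_
    split_ifs
    · exact mul_mem hcS ht
    · exact zero_mem _
  have hpt : p.eval t = 0 := by
    rw [hpdef]; simp [mul_comm]
  intro v hv
  have := key_val (v.valuation k) p hp0 (fun i => (hpc i) v hv) t hpt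
  rwa [hplead] at this
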